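/- The tamed Milstein coefficients (TMS1) satisfy the boundedness and one-step modification estimates: let d ∈ ℕ (d ≥ 1), γ ∈ [1,∞), K > 0, and let μ, g : ℝ^d → ℝ^d and σ_j : ℝ^d → ℝ^d (j = 1,…,m) satisfy ‖μ(x)‖ ≤ K(1+‖x‖)^{γ}, ‖g(x)‖ ≤ K(1+‖x‖)^{γ} and ‖σ_j(x)‖² ≤ K(1+‖x‖)^{γ+1} for all x. For h > 0 define μ_h(x) := μ(x)/(1+‖μ(x)‖²h), σ_{h,j}(x) := σ_j(x)/(1+‖μ(x)‖²h) and g_h(x) := g(x)/(1+‖g(x)‖²h). Then there exists C' > 0, depending only on K, γ and m, such that for all h > 0 and all x ∈ ℝ^d: ‖μ_h(x)‖ ≤ min{(1/2)h^{−1/2}(1+‖x‖), ‖μ(x)‖}; ‖g_h(x)‖ ≤ min{(1/2)h^{−1/2}(1+‖x‖), ‖g(x)‖}; ‖μ(x) − μ_h(x)‖ ≤ C'·h·(1+‖x‖)^{3γ}; (Σ_{j=1}^{m}‖σ_j(x) − σ_{h,j}(x)‖²)^{1/2} ≤ C'·h·(1+‖x‖)^{(5γ+1)/2}; and ‖g(x)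 − g_h(x)‖ ≤ C'·h·(1+‖x‖)^{3γ}. -/

import Mathlib

open Real Finset

lemma tame_core_half (a h : ℝ) (ha : 0 ≤ a) (hh : 0 < h) :
    (1 + a ^ 2 * h)⁻¹ * a ≤ (1 / 2) * h ^ (-(1 / 2) : ℝ) := by
  have hD : (0:ℝ) < 1 + a ^ 2 * h := by positivity
  have hs : 0 < Real.sqrt h := Real.sqrt_pos.mpr hh
  have hs2 : Real.sqrt h ^ 2 = h := Real.sq_sqrt hh.le
  have key : a * (2 * Real.sqrt h) ≤ 1 + a ^ 2 * h := by
    nlinarith [sq_nonneg (a * Real.sqrt h - 1)]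
  have hrw : h ^ (-(1 / 2) : ℝ) = (Real.sqrt h)⁻¹ := by
    rw [Real.rpow_neg hh.le, ← Real.sqrt_eq_rpow]
  have h2s : (0:ℝ) < 2 * Real.sqrt h := by positivity
  have hhalf : (1/2 : ℝ) * (Real.sqrt h)⁻¹ = 1 / (2 * Real.sqrt h) := by
    field_simp
  rw [hrw, hhalf, ← div_eq_inv_mul, div_le_div_iff₀ hD h2s]
  linarith [key]

lemma tame_diff {E : Type*} [NormedAddCommGroup E] [NormedSpace ℝ E]
    (v : E) (a h : ℝ) (hh : 0 < h) :
    ‖v - (1 + a ^ 2 * h)⁻¹ • v‖ ≤ a ^ 2 * h * ‖v‖ := by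
  have hD : (0:ℝ) < 1 + a ^ 2 * h := by positivity
  have h1 : (1:ℝ) ≤ 1 + a ^ 2 * h := by nlinarith [sq_nonneg a]
  have hrw : v - (1 + a ^ 2 * h)⁻¹ • v = (1 - (1 + a ^ 2 * h)⁻¹) • v := by
    rw [sub_smul, one_smul]
  rw [hrw, norm_smul, Real.norm_eq_abs,
    abs_of_nonneg (by rw [sub_nonneg]; exact inv_le_one_of_one_le₀ h1)]
  have hq : 1 - (1 + a ^ 2 * h)⁻¹ = a ^ 2 * h / (1 + a ^ 2 * h) := by
    field_simp
    ring
  rw [hq]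
  exact mul_le_mul_of_nonneg_right (div_le_self (by positivity) h1) (norm_nonneg v)

lemma smul_norm_inv {E : Type*} [NormedAddCommGroup E] [NormedSpace ℝ E]
    (v : E) (c : ℝ) (hc : 0 < c) : ‖c⁻¹ • v‖ = c⁻¹ * ‖v‖ := by
  rw [norm_smul, Real.norm_eq_abs, abs_of_pos (inv_pos.mpr hc)]

/-- Boundedness and one-step modification estimates for the tamed Milstein
coefficients of Model 1 (TMS1). -/
theorem tamed_milstein_TMS1_estimates
    (d m : ℕ) (hd : 1 ≤ d) (hm : 1 ≤ m) (γ K : ℝ) (hγ : 1 ≤ γ) (hK : 0 < K)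
    (μ g : EuclideanSpace ℝ (Fin d) → EuclideanSpace ℝ (Fin d))
    (σ : Fin m → EuclideanSpace ℝ (Fin d) → EuclideanSpace ℝ (Fin d))
    (hμ : ∀ x, ‖μ x‖ ≤ K * (1 + ‖x‖) ^ γ)
    (hg : ∀ x, ‖g x‖ ≤ K * (1 + ‖x‖) ^ γ)
    (hσ : ∀ j x, ‖σ j x‖ ^ 2 ≤ K * (1 + ‖x‖) ^ (γ + 1)) :
    ∃ C' : ℝ, 0 < C' ∧
      ∀ h : ℝ, 0 < h → ∀ x : EuclideanSpace ℝ (Fin d),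
        ‖(1 + ‖μ x‖ ^ 2 * h)⁻¹ • μ x‖
            ≤ min ((1 / 2) * h ^ (-(1 / 2) : ℝ) * (1 + ‖x‖)) ‖μ x‖ ∧
        ‖(1 + ‖g x‖ ^ 2 * h)⁻¹ • g x‖
            ≤ min ((1 / 2) * h ^ (-(1 / 2) : ℝ) * (1 + ‖x‖)) ‖g x‖ ∧
        ‖μ x - (1 + ‖μ x‖ ^ 2 * h)⁻¹ • μ x‖ ≤ C' * h * (1 + ‖x‖) ^ (3 * γ) ∧
        (∑ j, ‖σ j x - (1 + ‖μ x‖ ^ 2 * h)⁻¹ • σ j x‖ ^ 2) ^ ((1 : ℝ) / 2)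
            ≤ C' * h * (1 + ‖x‖) ^ ((5 * γ + 1) / 2) ∧
        ‖g x - (1 + ‖g x‖ ^ 2 * h)⁻¹ • g x‖ ≤ C' * h * (1 + ‖x‖) ^ (3 * γ) := by
  set M : ℝ := max K 1 with hMdef
  have hM1 : (1:ℝ) ≤ M := le_max_right _ _
  have hMK : K ≤ M := le_max_left _ _
  have hM0 : (0:ℝ) < M := lt_of_lt_of_le one_pos hM1
  have hm1 : (1:ℝ) ≤ (m:ℝ) := by exact_mod_cast hm
  have hsm1 : (1:ℝ) ≤ Real.sqrt m := by
    rw [show (1:ℝ) = Real.sqrt 1 from (Real.sqrt_one).symm]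
    exact Real.sqrt_le_sqrt hm1
  refine ⟨Real.sqrt m * M ^ 3, by positivity, ?_⟩
  intro h hh x
  have hP0 : (0:ℝ) < 1 + ‖x‖ := by positivity
  have hP1 : (1:ℝ) ≤ 1 + ‖x‖ := by linarith [norm_nonneg x]
  -- generic bounds
  have hC1 : K ^ 3 ≤ Real.sqrt m * M ^ 3 := by
    calc K ^ 3 ≤ M ^ 3 := by gcongr
    _ ≤ Real.sqrt m * M ^ 3 := le_mul_of_one_le_left (by positivity) hsm1
  -- bounded part, for μ and g uniformly
  have bdd : ∀ v : EuclideanSpace ℝ (Fin d),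
      ‖(1 + ‖v‖ ^ 2 * h)⁻¹ • v‖
        ≤ min ((1 / 2) * h ^ (-(1 / 2) : ℝ) * (1 + ‖x‖)) ‖v‖ := by
    intro v
    have hD : (0:ℝ) < 1 + ‖v‖ ^ 2 * h := by positivity
    have h1 : (1:ℝ) ≤ 1 + ‖v‖ ^ 2 * h := by nlinarith [mul_nonneg (sq_nonneg ‖v‖) hh.le]
    rw [smul_norm_inv v _ hD]
    refine le_min ?_ ?_
    · have := tame_core_half ‖v‖ h (norm_nonneg v) hh
      calc (1 + ‖v‖ ^ 2 * h)⁻¹ * ‖v‖ ≤ (1 / 2) * h ^ (-(1 / 2) : ℝ) := this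
        _ ≤ (1 / 2) * h ^ (-(1 / 2) : ℝ) * (1 + ‖x‖) :=
          le_mul_of_one_le_right (by positivity) hP1
    · calc (1 + ‖v‖ ^ 2 * h)⁻¹ * ‖v‖ ≤ 1 * ‖v‖ :=
        mul_le_mul_of_nonneg_right (inv_le_one_of_one_le₀ h1) (norm_nonneg v)
      _ = ‖v‖ := one_mul _
  -- drift-type difference bound
  have drift : ∀ v : EuclideanSpace ℝ (Fin d), ‖v‖ ≤ K * (1 + ‖x‖) ^ γ →
      ‖v - (1 + ‖v‖ ^ 2 * h)⁻¹ • v‖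
        ≤ Real.sqrt m * M ^ 3 * h * (1 + ‖x‖) ^ (3 * γ) := by
    intro v hv
    have hcube : ‖v‖ ^ 3 ≤ K ^ 3 * (1 + ‖x‖) ^ (3 * γ) := by
      calc ‖v‖ ^ 3 ≤ (K * (1 + ‖x‖) ^ γ) ^ 3 :=
        pow_le_pow_left₀ (norm_nonneg v) hv 3
      _ = K ^ 3 * ((1 + ‖x‖) ^ γ) ^ (3:ℕ) := by ring
      _ = K ^ 3 * (1 + ‖x‖) ^ (3 * γ) := by
          rw [← Real.rpow_natCast ((1 + ‖x‖) ^ γ) 3, ← Real.rpow_mul hP0.le]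
          norm_num [mul_comm]
    calc ‖v - (1 + ‖v‖ ^ 2 * h)⁻¹ • v‖ ≤ ‖v‖ ^ 2 * h * ‖v‖ :=
        tame_diff v ‖v‖ h hh
      _ = ‖v‖ ^ 3 * h := by ring
      _ ≤ K ^ 3 * (1 + ‖x‖) ^ (3 * γ) * h :=
        mul_le_mul_of_nonneg_right hcube hh.le
      _ ≤ Real.sqrt m * M ^ 3 * h * (1 + ‖x‖) ^ (3 * γ) := by
        rw [show Real.sqrt m * M ^ 3 * h * (1 + ‖x‖) ^ (3 * γ)
            = Real.sqrt m * M ^ 3 * (1 + ‖x‖) ^ (3 * γ) * h by ring]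
        have : (0:ℝ) ≤ (1 + ‖x‖) ^ (3 * γ) := by positivity
        exact mul_le_mul_of_nonneg_right
          (mul_le_mul_of_nonneg_right hC1 this) hh.le
  refine ⟨bdd (μ x), bdd (g x), drift (μ x) (hμ x), ?_, drift (g x) (hg x)⟩
  -- diffusion part
  set A : ℝ := ‖μ x‖ with hA
  have hA0 : 0 ≤ A := norm_nonneg _
  set R : ℝ := Real.sqrt m * M ^ 3 * h * (1 + ‖x‖) ^ ((5 * γ + 1) / 2) with hR
  have hR0 : (0:ℝ) ≤ R := by positivity
  have hA4 : A ^ 4 ≤ K ^ 4 * (1 + ‖x‖) ^ (4 * γ) := by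
    calc A ^ 4 ≤ (K * (1 + ‖x‖) ^ γ) ^ 4 := pow_le_pow_left₀ hA0 (hμ x) 4
      _ = K ^ 4 * ((1 + ‖x‖) ^ γ) ^ (4:ℕ) := by ring
      _ = K ^ 4 * (1 + ‖x‖) ^ (4 * γ) := by
          rw [← Real.rpow_natCast ((1 + ‖x‖) ^ γ) 4, ← Real.rpow_mul hP0.le]
          norm_num [mul_comm]
  have term_bd : ∀ j : Fin m,
      ‖σ j x - (1 + A ^ 2 * h)⁻¹ • σ j x‖ ^ 2
        ≤ K ^ 5 * (1 + ‖x‖) ^ (5 * γ + 1) * h ^ 2 := by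
    intro j
    have h1 : ‖σ j x - (1 + A ^ 2 * h)⁻¹ • σ j x‖ ≤ A ^ 2 * h * ‖σ j x‖ :=
      tame_diff (σ j x) A h hh
    calc ‖σ j x - (1 + A ^ 2 * h)⁻¹ • σ j x‖ ^ 2
        ≤ (A ^ 2 * h * ‖σ j x‖) ^ 2 := by
          apply pow_le_pow_left₀ (norm_nonneg _) h1
      _ = A ^ 4 * ‖σ j x‖ ^ 2 * h ^ 2 := by ring
      _ ≤ K ^ 4 * (1 + ‖x‖) ^ (4 * γ) * (K * (1 + ‖x‖) ^ (γ + 1)) * h ^ 2 := by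
          have h2 := hσ j x
          have := mul_le_mul hA4 h2 (by positivity) (by positivity)
          nlinarith [sq_nonneg h]
      _ = K ^ 5 * ((1 + ‖x‖) ^ (4 * γ) * (1 + ‖x‖) ^ (γ + 1)) * h ^ 2 := by ring
      _ = K ^ 5 * (1 + ‖x‖) ^ (5 * γ + 1) * h ^ 2 := by
          rw [← Real.rpow_add hP0]
          ring_nf
  have sum_bd : (∑ j, ‖σ j x - (1 + A ^ 2 * h)⁻¹ • σ j x‖ ^ 2) ≤ R ^ 2 := by
    have hRsq : R ^ 2 = (m:ℝ) * M ^ 6 * (1 + ‖x‖) ^ (5 * γ + 1) * h ^ 2 := by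
      have hsq : Real.sqrt (m:ℝ) ^ 2 = (m:ℝ) := Real.sq_sqrt (by positivity)
      have hPsq : ((1 + ‖x‖) ^ ((5 * γ + 1) / 2)) ^ (2:ℕ) = (1 + ‖x‖) ^ (5 * γ + 1) := by
        rw [← Real.rpow_natCast ((1 + ‖x‖) ^ ((5 * γ + 1) / 2)) 2,
          ← Real.rpow_mul hP0.le]
        norm_num
      calc R ^ 2 = Real.sqrt (m:ℝ) ^ 2 * (M ^ 3) ^ 2
            * ((1 + ‖x‖) ^ ((5 * γ + 1) / 2)) ^ (2:ℕ) * h ^ 2 := by ring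
        _ = (m:ℝ) * M ^ 6 * (1 + ‖x‖) ^ (5 * γ + 1) * h ^ 2 := by
            rw [hsq, hPsq]; ring
    calc (∑ j, ‖σ j x - (1 + A ^ 2 * h)⁻¹ • σ j x‖ ^ 2)
        ≤ ∑ _j : Fin m, K ^ 5 * (1 + ‖x‖) ^ (5 * γ + 1) * h ^ 2 :=
          Finset.sum_le_sum fun j _ => term_bd j
      _ = (m:ℝ) * (K ^ 5 * (1 + ‖x‖) ^ (5 * γ + 1) * h ^ 2) := by
          rw [Finset.sum_const, Finset.card_univ, Fintype.card_fin, nsmul_eq_mul]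
      _ ≤ R ^ 2 := by
          rw [hRsq]
          have hK5 : K ^ 5 ≤ M ^ 6 := by
            calc K ^ 5 ≤ M ^ 5 := by gcongr
            _ ≤ M ^ 6 := pow_le_pow_right₀ hM1 (by norm_num)
          have : (0:ℝ) ≤ (1 + ‖x‖) ^ (5 * γ + 1) * h ^ 2 := by positivity
          nlinarith [mul_le_mul_of_nonneg_right hK5 this, hm1,
            sq_nonneg h, mul_pos (pow_pos hM0 6) (mul_pos (Real.rpow_pos_of_pos hP0 (5*γ+1)) (pow_pos hh 2))]
  calc (∑ j, ‖σ j x - (1 + A ^ 2 * h)⁻¹ • σ j x‖ ^ 2) ^ ((1:ℝ) / 2)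
      ≤ (R ^ 2) ^ ((1:ℝ) / 2) :=
        Real.rpow_le_rpow (Finset.sum_nonneg fun j _ => sq_nonneg _) sum_bd (by norm_num)
    _ = R := by
        rw [← Real.rpow_natCast R 2, ← Real.rpow_mul hR0]
        norm_num
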